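/- Let Σ ⊂ ℤ_3 be the set of 3-adic integers all of whose digits lie in {0,1}, and suppose M > 1 is a positive integer coprime to 3 with M ≡ 1 (mod 3) and M not a power of 3. Write m ≥ 1 for the position of the second-lowest nonzero ternary digit of M. Then for every r ≥ 2m, the number of residue classes λ mod 3^r that contain an element of Σ ∩ (1/M)Σ is at most 3^{r/2 + 2m}. -/

import Mathlib

namespace AdmCount

/-- digit `i` of the base-3 expansion -/
def dig (i x : ℕ) : ℕ := x / 3 ^ i % 3

lemma dig_mod_pow {i n : ℕ} (h : i < n) (u : ℕ) : dig i (u % 3 ^ n) = dig i u := by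
  unfold dig
  have h1 : 3 ^ n = 3 ^ i * 3 ^ (n - i) := by rw [← pow_add]; congr 1; omega
  rw [h1, Nat.mod_mul_right_div_self]
  exact Nat.mod_mod_of_dvd _ (dvd_pow_self 3 (by omega))

lemma dig_div_pow (k i x : ℕ) : dig i (x / 3 ^ k) = dig (k + i) x := by
  unfold dig
  rw [Nat.div_div_eq_div_mul, ← pow_add]

lemma dig_succ (i x : ℕ) : dig (i + 1) x = dig i (x / 3) := by
  unfold dig
  rw [Nat.div_div_eq_div_mul, ← pow_succ']

lemma dig_add_mul_pow_self {i n : ℕ} (h : i < n) (X Y : ℕ) :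
    dig i (X + 3 ^ n * Y) = dig i X := by
  rw [← dig_mod_pow h (X + 3 ^ n * Y), Nat.add_mul_mod_self_left, dig_mod_pow h]

/-- the set of `x < 3^n` with ternary digits ≤ 1 such that the digits of `(a+x) % 3^n`
are also ≤ 1 -/
def gset (n a : ℕ) : Finset ℕ :=
  (Finset.range (3 ^ n)).filter fun x => (∀ i < n, dig i x ≤ 1) ∧ (∀ i < n, dig i ((a + x) % 3 ^ n) ≤ 1)

lemma mem_gset {n a x : ℕ} :
    x ∈ gset n a ↔ x < 3 ^ n ∧ (∀ i < n, dig i x ≤ 1) ∧ (∀ i < n, dig i ((a + x) % 3 ^ n) ≤ 1) := by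
  simp [gset, and_assoc]

lemma gset_zero (a : ℕ) : gset 0 a = {0} := by
  ext x; simp [mem_gset, Nat.lt_one_iff]

lemma mem_gset_succ {m a x : ℕ} :
    x ∈ gset (m + 1) a ↔
      x % 3 ≤ 1 ∧ (a + x % 3) % 3 ≤ 1 ∧ x / 3 ∈ gset m ((a + x % 3) / 3) := by
  have hx3 : x = 3 * (x / 3) + x % 3 := (Nat.div_add_mod' x 3).symm ▸ by omega
  constructor
  · rintro h
    rw [mem_gset] at h
    obtain ⟨hlt, hd, hs⟩ := h
    have h0 : x % 3 ≤ 1 := by have := hd 0 (by omega); simpa [dig] using this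
    have hax : (a + x) % 3 = (a + x % 3) % 3 := by omega
    have h1 : (a + x) % 3 ≤ 1 := by
      have := hs 0 (by omega)
      have e : dig 0 ((a + x) % 3 ^ (m+1)) = (a + x) % 3 := by
        rw [dig_mod_pow (by omega)]; simp [dig]
      omega
    refine ⟨h0, by omega, ?_⟩
    rw [mem_gset]
    refine ⟨by omega, ?_, ?_⟩
    · intro i hi
      have := hd (i+1) (by omega)
      rwa [← dig_succ]
    · intro i hi
      have := hs (i+1) (by omega)
      rw [dig_mod_pow (by omega)] at this
      rw [dig_mod_pow hi]
      have e2 : (a + x % 3) / 3 + x / 3 = (a + x) / 3 := by omega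
      rw [show dig i ((a + x % 3) / 3 + x / 3) = dig (i+1) (a+x) by rw [e2, ← dig_succ]]
      exact this
  · rintro ⟨h0, h1, h2⟩
    rw [mem_gset] at h2 ⊢
    obtain ⟨hlt, hd, hs⟩ := h2
    refine ⟨by omega, ?_, ?_⟩
    · intro i hi
      match i with
      | 0 => simpa [dig] using h0
      | i+1 =>
        rw [dig_succ]
        exact hd i (by omega)
    · intro i hi
      rw [dig_mod_pow hi]
      match i with
      | 0 => simp [dig]; omega
      | i+1 =>
        have := hs i (by omega)
        rw [dig_mod_pow (by omega)] at this
        rw [dig_succ]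
        rwa [show (a + x) / 3 = (a + x % 3) / 3 + x / 3 by omega]

/-- number of "free" digit positions when adding an element of `gset` to `a` -/
def phi : ℕ → ℕ → ℕ
  | 0, _ => 0
  | n + 1, d => (if d % 3 = 0 then 1 else 0) + phi n (d / 3 + if d % 3 = 2 then 1 else 0)

/-- the carry propagation map -/
def astep (a : ℕ) : ℕ := a / 3 + if a % 3 = 2 then 1 else 0

lemma carry_const {m a x : ℕ} (hx : x ∈ gset m a) : (a + x) / 3 ^ m = astep^[m] a := by
  induction m generalizing a x with
  | zero => rw [gset_zero] at hx; simp_all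
  | succ m ih =>
    rw [mem_gset_succ] at hx
    obtain ⟨h0, h1, h2⟩ := hx
    have e1 : (a + x) / 3 ^ (m+1) = ((a + x % 3)/3 + x/3) / 3 ^ m := by
      rw [pow_succ, mul_comm, ← Nat.div_div_eq_div_mul]
      congr 1; omega
    have e2 : (a + x % 3)/3 = astep a := by unfold astep; split <;> omega
    rw [e1, e2, ih (e2 ▸ h2), ← Function.iterate_succ_apply]

-- filter lemmas
lemma gset_filter_empty {m a e : ℕ} (he : e ≤ 1) (hbad : (a + e) % 3 = 2) :
    (gset (m+1) a).filter (fun x => x % 3 = e) = ∅ := by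
  rw [Finset.filter_eq_empty_iff]
  intro x hx
  rw [mem_gset_succ] at hx
  intro hxe
  rw [hxe] at hx
  omega

lemma gset_filter_eq {m a e : ℕ} (he : e ≤ 1) (hgood : (a + e) % 3 ≤ 1) :
    (gset (m+1) a).filter (fun x => x % 3 = e) = (gset m ((a+e)/3)).image (fun y => 3*y + e) := by
  ext x
  simp only [Finset.mem_filter, Finset.mem_image]
  constructor
  · rintro ⟨hx, hxe⟩
    rw [mem_gset_succ, hxe] at hx
    exact ⟨x / 3, hx.2.2, by omega⟩
  · rintro ⟨y, hy, rfl⟩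
    have h1 : (3*y+e) % 3 = e := by omega
    refine ⟨?_, h1⟩
    rw [mem_gset_succ, h1]
    refine ⟨he, hgood, ?_⟩
    rwa [show (3*y+e)/3 = y by omega]

lemma sum_gset_succ (m a : ℕ) (f : ℕ → ℕ) :
    ∑ x ∈ gset (m+1) a, f x =
      (if a % 3 ≤ 1 then ∑ y ∈ gset m ((a+0)/3), f (3*y) else 0)
      + (if (a+1) % 3 ≤ 1 then ∑ y ∈ gset m ((a+1)/3), f (3*y+1) else 0) := by
  rw [← Finset.sum_filter_add_sum_filter_not (gset (m+1) a) (fun x => x % 3 = 0) f]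
  have hnot : (gset (m+1) a).filter (fun x => ¬ x % 3 = 0) = (gset (m+1) a).filter (fun x => x % 3 = 1) := by
    apply Finset.filter_congr
    intro x hx
    rw [mem_gset_succ] at hx
    constructor <;> omega
  rw [hnot]
  congr 1
  · by_cases h : a % 3 ≤ 1
    · rw [if_pos h, gset_filter_eq (by omega) (by omega), Finset.sum_image (fun u hu v hv hh => by omega)]
      simp
    · rw [if_neg h, gset_filter_empty (by omega) (by omega)]
      simp
  · by_cases h : (a+1) % 3 ≤ 1
    · rw [if_pos h, gset_filter_eq (by omega) (by omega), Finset.sum_image (fun u hu v hv hh => by omega)]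
    · rw [if_neg h, gset_filter_empty (by omega) (by omega)]
      simp

lemma phi_succ (m u v : ℕ) :
    phi (m+1) (u + 3*v) = (if u % 3 = 0 then 1 else 0) + phi m ((u/3 + if u % 3 = 2 then 1 else 0) + v) := by
  show (if (u + 3*v) % 3 = 0 then 1 else 0) + phi m ((u + 3*v) / 3 + _) = _
  rw [Nat.add_mul_mod_self_left, Nat.add_mul_div_left _ _ (by norm_num)]
  congr 2
  omega

lemma gset_card_le (n : ℕ) : ∀ d, (gset n d).card ≤ 2 ^ phi n d := by
  induction n with
  | zero => intro d; rw [gset_zero]; simp [phi]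
  | succ n ih =>
    intro d
    have h := sum_gset_succ n d (fun _ => 1)
    rw [Finset.card_eq_sum_ones, h]
    rcases (show d % 3 = 0 ∨ d % 3 = 1 ∨ d % 3 = 2 by omega) with h3 | h3 | h3
    · have hphi : phi (n+1) d = 1 + phi n (d/3) := by
        show (if d % 3 = 0 then 1 else 0) + phi n (d / 3 + if d % 3 = 2 then 1 else 0) = _
        rw [h3]; norm_num
      rw [hphi, if_pos (by omega), if_pos (by omega), show (d+0)/3 = d/3 by omega,
          show (d+1)/3 = d/3 by omega, ← Finset.card_eq_sum_ones, pow_add, pow_one]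
      have := ih (d/3)
      omega
    · have hphi : phi (n+1) d = phi n (d/3) := by
        show (if d % 3 = 0 then 1 else 0) + phi n (d / 3 + if d % 3 = 2 then 1 else 0) = _
        rw [h3]; norm_num
      rw [hphi, if_pos (by omega), if_neg (by omega), show (d+0)/3 = d/3 by omega,
          ← Finset.card_eq_sum_ones, add_zero]
      exact ih (d/3)
    · have hphi : phi (n+1) d = phi n (d/3 + 1) := by
        show (if d % 3 = 0 then 1 else 0) + phi n (d / 3 + if d % 3 = 2 then 1 else 0) = _
        rw [h3]; norm_num
      rw [hphi, if_neg (by omega), if_pos (by omega), show (d+1)/3 = d/3 + 1 by omega,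
          ← Finset.card_eq_sum_ones, zero_add]
      exact ih (d/3 + 1)

lemma main_sum (C : ℕ) (hC : C % 3 ≠ 0) :
    ∀ n a b, (∑ z ∈ gset n a, 2 ^ phi n (b + C * z)) ≤ 3 ^ n := by
  intro n
  induction n with
  | zero => intro a b; rw [gset_zero]; simp [phi]
  | succ n ih =>
    intro a b
    rw [sum_gset_succ]
    have key : ∀ e, e ≤ 1 → (∑ y ∈ gset n ((a+e)/3), 2 ^ phi (n+1) (b + C * (3*y+e)))
        ≤ (if (b + C*e) % 3 = 0 then 2 else 1) * 3 ^ n := by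
      intro e he
      have : ∀ y, b + C * (3*y+e) = (b + C*e) + 3*(C*y) := by intro y; ring
      calc (∑ y ∈ gset n ((a+e)/3), 2 ^ phi (n+1) (b + C * (3*y+e)))
          = ∑ y ∈ gset n ((a+e)/3), (if (b + C*e) % 3 = 0 then 2 else 1) *
              2 ^ phi n (((b + C*e)/3 + if (b + C*e) % 3 = 2 then 1 else 0) + C*y) := by
            apply Finset.sum_congr rfl
            intro y _
            rw [this y, phi_succ, pow_add]
            congr 1
            split <;> norm_num
        _ = (if (b + C*e) % 3 = 0 then 2 else 1) *
              ∑ y ∈ gset n ((a+e)/3), 2 ^ phi n (((b + C*e)/3 + if (b + C*e) % 3 = 2 then 1 else 0) + C*y) := by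
            rw [Finset.mul_sum]
        _ ≤ (if (b + C*e) % 3 = 0 then 2 else 1) * 3 ^ n := by
            apply Nat.mul_le_mul_left
            exact ih _ _
    have hboth : ¬ ((b + C*0) % 3 = 0 ∧ (b + C*1) % 3 = 0) := by
      rintro ⟨h0, h1⟩
      rw [mul_zero, add_zero] at h0
      rw [mul_one] at h1
      omega
    have h30 : (3:ℕ) ^ (n+1) = 3 * 3 ^ n := by ring
    by_cases h0 : a % 3 ≤ 1 <;> by_cases h1 : (a+1) % 3 ≤ 1
    · rw [if_pos h0, if_pos h1]
      calc _ ≤ (if (b + C*0) % 3 = 0 then 2 else 1) * 3 ^ n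
              + (if (b + C*1) % 3 = 0 then 2 else 1) * 3 ^ n :=
            Nat.add_le_add (key 0 (by omega)) (key 1 (by omega))
        _ ≤ 3 ^ (n+1) := by
            rw [h30]
            split_ifs with hh1 hh2 hh2 <;> [exact absurd ⟨hh1, hh2⟩ hboth; omega; omega; omega]
    · rw [if_pos h0, if_neg h1, add_zero]
      calc _ ≤ (if (b + C*0) % 3 = 0 then 2 else 1) * 3 ^ n := key 0 (by omega)
        _ ≤ 3 ^ (n+1) := by rw [h30]; apply Nat.mul_le_mul_right; split <;> omega
    · rw [if_neg h0, if_pos h1, zero_add]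
      calc _ ≤ (if (b + C*1) % 3 = 0 then 2 else 1) * 3 ^ n := key 1 (by omega)
        _ ≤ 3 ^ (n+1) := by rw [h30]; apply Nat.mul_le_mul_right; split <;> omega
    · exfalso; omega
lemma pow3_pos (n : ℕ) : 0 < 3 ^ n := Nat.pow_pos (by norm_num)

def coreSet (M mm a : ℕ) : Finset ℕ :=
  (Finset.range (3 ^ mm)).filter fun z =>
    (∀ i < mm, dig i z ≤ 1) ∧ (∀ i < mm, dig i ((a + M * z) % 3 ^ mm) ≤ 1)

lemma mem_coreSet {M mm a z : ℕ} :
    z ∈ coreSet M mm a ↔ z < 3 ^ mm ∧ (∀ i < mm, dig i z ≤ 1) ∧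
      (∀ i < mm, dig i ((a + M * z) % 3 ^ mm) ≤ 1) := by
  simp [coreSet, and_assoc]

lemma core_card {M : ℕ} (m C a : ℕ) (hM : M = 1 + 3^m * C) (hC : C % 3 ≠ 0) :
    (coreSet M (2*m) a).card ≤ 3 ^ m := by
  set Q := astep^[m] a with hQ
  have h2m : (3:ℕ) ^ (2*m) = 3^m * 3^m := by rw [two_mul, pow_add]
  have hmaps : ∀ z ∈ coreSet M (2*m) a, z % 3^m ∈ gset m a := by
    intro z hz
    rw [mem_coreSet] at hz
    obtain ⟨hlt, hd, hs⟩ := hz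
    rw [mem_gset]
    have hMz : a + M * z = (a + z) + 3^m * (C * z) := by rw [hM]; ring
    refine ⟨Nat.mod_lt _ (pow3_pos m), ?_, ?_⟩
    · intro i hi
      rw [dig_mod_pow hi]
      exact hd i (by omega)
    · intro i hi
      have e1 : (a + z % 3^m) % 3^m = (a + M * z) % 3^m := by
        have h1 : (a + z % 3^m) % 3^m = (a + z) % 3^m :=
          Nat.ModEq.add_left a (Nat.mod_modEq z (3^m))
        rw [h1, hMz, Nat.add_mul_mod_self_left]
      rw [e1, dig_mod_pow hi, ← dig_mod_pow (show i < 2*m by omega) (a + M*z)]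
      exact hs i (by omega)
  rw [Finset.card_eq_sum_card_fiberwise hmaps]
  have hfiber : ∀ z₀ ∈ gset m a,
      ((coreSet M (2*m) a).filter (fun z => z % 3^m = z₀)).card ≤ 2 ^ phi m (Q + C * z₀) := by
    intro z₀ hz₀
    refine le_trans (Finset.card_le_card_of_injOn (fun z => z / 3^m) ?_ ?_) (gset_card_le m _)
    · intro z hz
      simp only [Finset.mem_coe, Finset.mem_filter] at hz ⊢
      obtain ⟨hz, hmod⟩ := hz
      rw [mem_coreSet] at hz
      obtain ⟨hlt, hd, hs⟩ := hz
      set z₁ := z / 3^m with hz1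
      have hzd : z = 3^m * z₁ + z₀ := by
        rw [hz1, ← hmod]; exact (Nat.div_add_mod z (3^m)).symm
      rw [mem_gset]
      refine ⟨?_, ?_, ?_⟩
      · show z / 3^m < 3^m
        rw [Nat.div_lt_iff_lt_mul (pow3_pos m)]; omega
      · intro i hi
        show dig i (z / 3^m) ≤ 1
        rw [dig_div_pow]
        exact hd (m+i) (by omega)
      · intro i hi
        show dig i (((Q + C * z₀) + z / 3 ^ m) % 3^m) ≤ 1
        rw [show z / 3^m = z₁ from hz1.symm]
        have key : a + M * z = (a + z₀) + 3^m * (z₁ + C * z) := by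
          rw [hM, hzd]; ring
        have hdiv : (a + M * z) / 3^m = Q + (z₁ + C * z) := by
          rw [key, Nat.add_mul_div_left _ _ (pow3_pos m), carry_const hz₀]
        have e2 : dig i (((Q + C * z₀) + z₁) % 3^m) = dig (m+i) ((a + M * z) % 3 ^ (2*m)) := by
          rw [dig_mod_pow hi, ← dig_add_mul_pow_self hi ((Q + C * z₀) + z₁) (C * z₁),
            show (Q + C * z₀) + z₁ + 3^m * (C * z₁) = Q + (z₁ + C * z) by
              rw [hzd]; ring,
            ← hdiv, dig_div_pow, dig_mod_pow (show m + i < 2*m by omega)]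
        rw [e2]
        exact hs (m+i) (by omega)
    · intro u hu v hv huv
      simp only [Finset.mem_coe, Finset.mem_filter] at hu hv
      have huv' : u / 3^m = v / 3^m := huv
      calc u = 3^m * (u / 3^m) + z₀ := by rw [← hu.2]; exact (Nat.div_add_mod u (3^m)).symm
        _ = 3^m * (v / 3^m) + z₀ := by rw [huv']
        _ = v := by rw [← hv.2]; exact Nat.div_add_mod v (3^m)
  calc ∑ z₀ ∈ gset m a, ((coreSet M (2*m) a).filter (fun z => z % 3^m = z₀)).card
      ≤ ∑ z₀ ∈ gset m a, 2 ^ phi m (Q + C * z₀) := Finset.sum_le_sum hfiber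
    _ ≤ 3 ^ m := main_sum C hC m a Q

def adm (M r : ℕ) : Finset ℕ :=
  (Finset.range (3 ^ r)).filter fun x =>
    (∀ i < r, dig i x ≤ 1) ∧ (∀ i < r, dig i ((M * x) % 3 ^ r) ≤ 1)

lemma mem_adm {M r x : ℕ} :
    x ∈ adm M r ↔ x < 3 ^ r ∧ (∀ i < r, dig i x ≤ 1) ∧ (∀ i < r, dig i ((M * x) % 3 ^ r) ≤ 1) := by
  simp [adm, and_assoc]

lemma adm_block {M : ℕ} (m C k : ℕ) (hM : M = 1 + 3^m * C) (hC : C % 3 ≠ 0) :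
    (adm M (k + 2*m)).card ≤ 3 ^ m * (adm M k).card := by
  have hmaps : ∀ x ∈ adm M (k + 2*m), x % 3^k ∈ adm M k := by
    intro x hx
    rw [mem_adm] at hx ⊢
    obtain ⟨hlt, hd, hs⟩ := hx
    refine ⟨Nat.mod_lt _ (pow3_pos k), ?_, ?_⟩
    · intro i hi
      rw [dig_mod_pow hi]
      exact hd i (by omega)
    · intro i hi
      have e1 : (M * (x % 3^k)) % 3^k = (M * x) % 3^k :=
        Nat.ModEq.mul_left M (Nat.mod_modEq x (3^k))
      rw [e1, dig_mod_pow hi, ← dig_mod_pow (show i < k + 2*m by omega) (M * x)]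
      exact hs i (by omega)
  rw [Finset.card_eq_sum_card_fiberwise hmaps]
  have hfiber : ∀ x₀ ∈ adm M k,
      ((adm M (k + 2*m)).filter (fun x => x % 3^k = x₀)).card ≤ 3 ^ m := by
    intro x₀ hx₀
    refine le_trans (Finset.card_le_card_of_injOn (fun x => x / 3^k) ?_ ?_)
      (core_card m C ((M * x₀) / 3^k) hM hC)
    · intro x hx
      simp only [Finset.mem_coe, Finset.mem_filter] at hx ⊢
      obtain ⟨hx, hmod⟩ := hx
      rw [mem_adm] at hx
      obtain ⟨hlt, hd, hs⟩ := hx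
      set x₁ := x / 3^k with hx1
      have hzd : x = 3^k * x₁ + x₀ := by
        rw [hx1, ← hmod]; exact (Nat.div_add_mod x (3^k)).symm
      rw [mem_coreSet]
      have hpk : (3:ℕ)^(k + 2*m) = 3^k * 3^(2*m) := by rw [pow_add]
      refine ⟨?_, ?_, ?_⟩
      · show x / 3^k < 3 ^ (2*m)
        rw [Nat.div_lt_iff_lt_mul (pow3_pos k), mul_comm]; rw [hpk] at hlt; exact hlt
      · intro i hi
        show dig i (x / 3^k) ≤ 1
        rw [dig_div_pow]
        exact hd (k+i) (by omega)
      · intro i hi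
        show dig i (((M * x₀) / 3^k + M * (x / 3^k)) % 3 ^ (2*m)) ≤ 1
        rw [show x / 3^k = x₁ from hx1.symm]
        have key : M * x = M * x₀ + 3^k * (M * x₁) := by rw [hzd]; ring
        have hdiv : (M * x) / 3^k = (M * x₀) / 3^k + M * x₁ := by
          rw [key, Nat.add_mul_div_left _ _ (pow3_pos k)]
        rw [dig_mod_pow hi, ← hdiv, dig_div_pow, ← dig_mod_pow (show k + i < k + 2*m by omega) (M * x)]
        exact hs (k+i) (by omega)
    · intro u hu v hv huv
      simp only [Finset.mem_coe, Finset.mem_filter] at hu hv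
      have huv' : u / 3^k = v / 3^k := huv
      calc u = 3^k * (u / 3^k) + x₀ := by rw [← hu.2]; exact (Nat.div_add_mod u (3^k)).symm
        _ = 3^k * (v / 3^k) + x₀ := by rw [huv']
        _ = v := by rw [← hv.2]; exact Nat.div_add_mod v (3^k)
  calc ∑ x₀ ∈ adm M k, ((adm M (k + 2*m)).filter (fun x => x % 3^k = x₀)).card
      ≤ ∑ x₀ ∈ adm M k, 3^m := Finset.sum_le_sum hfiber
    _ = 3 ^ m * (adm M k).card := by rw [Finset.sum_const, smul_eq_mul, mul_comm]

lemma phi_zero (s : ℕ) : phi s 0 = s := by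
  induction s with
  | zero => rfl
  | succ s ih => show (if (0:ℕ) % 3 = 0 then 1 else 0) + phi s _ = s + 1; simp [ih]; omega

lemma adm_card_le_two_pow (M s : ℕ) : (adm M s).card ≤ 2 ^ s := by
  have hsub : adm M s ⊆ gset s 0 := by
    intro x hx
    rw [mem_adm] at hx
    rw [mem_gset]
    obtain ⟨hlt, hd, _⟩ := hx
    refine ⟨hlt, hd, ?_⟩
    intro i hi
    rw [zero_add, Nat.mod_eq_of_lt hlt]
    exact hd i hi
  calc (adm M s).card ≤ (gset s 0).card := Finset.card_le_card hsub
    _ ≤ 2 ^ phi s 0 := gset_card_le s 0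
    _ = 2 ^ s := by rw [phi_zero]

lemma adm_sq {M : ℕ} (m C : ℕ) (hm : 1 ≤ m) (hM : M = 1 + 3^m * C) (hC : C % 3 ≠ 0) (r : ℕ) :
    (adm M r).card ^ 2 ≤ 3 ^ (r + 2*m + 1) := by
  induction r using Nat.strong_induction_on with
  | _ r ih =>
    by_cases hlt : r < 2*m
    · calc (adm M r).card ^ 2 ≤ (2^r)^2 := Nat.pow_le_pow_left (adm_card_le_two_pow M r) 2
        _ = 2 ^ (r*2) := (pow_mul 2 r 2).symm
        _ ≤ 3 ^ (r*2) := Nat.pow_le_pow_left (by norm_num) _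
        _ ≤ 3 ^ (r + 2*m + 1) := Nat.pow_le_pow_right (by norm_num) (by omega)
    · have hb := adm_block (M := M) m C (r - 2*m) hM hC
      rw [show r - 2*m + 2*m = r by omega] at hb
      calc (adm M r).card ^ 2 ≤ (3^m * (adm M (r - 2*m)).card)^2 := Nat.pow_le_pow_left hb 2
        _ = 3^m * 3^m * ((adm M (r - 2*m)).card)^2 := by ring
        _ ≤ 3^m * 3^m * 3^((r - 2*m) + 2*m + 1) := Nat.mul_le_mul_left _ (ih (r - 2*m) (by omega))
        _ = 3 ^ (m + (m + ((r - 2*m) + 2*m + 1))) := by rw [← pow_add, ← pow_add]; ring_nf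
        _ = 3 ^ (r + 2*m + 1) := by congr 1; omega


end AdmCount




/-- The `j`-th digit of the 3-adic expansion of `y`. -/
noncomputable def padicDigit (y : ℤ_[3]) (j : ℕ) : ℕ := y.appr (j + 1) / 3 ^ j % 3

lemma digits_getD (i : ℕ) : ∀ M : ℕ, (Nat.digits 3 M).getD i 0 = M / 3 ^ i % 3 := by
  induction i with
  | zero =>
    intro M
    rcases Nat.eq_zero_or_pos M with rfl | h
    · simp
    · rw [Nat.digits_def' (by norm_num : 1 < 3) h]
      simp
  | succ i ih =>
    intro M
    rcases Nat.eq_zero_or_pos M with rfl | h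
    · simp
    · rw [Nat.digits_def' (by norm_num : 1 < 3) h]
      show (Nat.digits 3 (M/3)).getD i 0 = _
      rw [ih (M/3), Nat.div_div_eq_div_mul, ← pow_succ']

lemma padicDigit_eq (y : ℤ_[3]) (n i : ℕ)
    (h : y - (n : ℤ_[3]) ∈ Ideal.span {((3:ℕ) : ℤ_[3]) ^ (i+1)}) :
    n / 3 ^ i % 3 = padicDigit y i := by
  have h2 := PadicInt.appr_spec (i+1) y
  have h3 : (((y.appr (i+1) : ℤ) - (n : ℤ) : ℤ) : ℤ_[3]) ∈ Ideal.span {((3:ℕ) : ℤ_[3]) ^ (i+1)} := by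
    have hmem := Ideal.sub_mem _ h h2
    have : y - (n : ℤ_[3]) - (y - (y.appr (i+1) : ℤ_[3])) = (((y.appr (i+1) : ℤ) - (n : ℤ) : ℤ) : ℤ_[3]) := by
      push_cast
      ring
    rwa [this] at hmem
  have h4 : (((3:ℕ):ℤ) ^ (i+1)) ∣ ((y.appr (i+1) : ℤ) - (n : ℤ)) := by
    rw [← PadicInt.norm_int_le_pow_iff_dvd]
    rw [PadicInt.norm_le_pow_iff_mem_span_pow]
    exact_mod_cast h3
  have h5 : (n : ℤ) % (3:ℤ) ^ (i+1) = (y.appr (i+1) : ℤ) % (3:ℤ) ^ (i+1) :=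
    Int.modEq_iff_dvd.mpr (by exact_mod_cast h4)
  have h6 : n % 3 ^ (i+1) = y.appr (i+1) % 3 ^ (i+1) := by exact_mod_cast h5
  have h7 : y.appr (i+1) % 3 ^ (i+1) = y.appr (i+1) :=
    Nat.mod_eq_of_lt (PadicInt.appr_lt y (i+1))
  show n / 3 ^ i % 3 = y.appr (i+1) / 3 ^ i % 3
  have := AdmCount.dig_mod_pow (show i < i + 1 by omega) n
  unfold AdmCount.dig at this
  rw [← this, h6, h7]

theorem admissible_residue_count_bound (M : ℕ) (hM : 1 < M) (hM3 : ¬ 3 ∣ M)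
    (hM1 : M % 3 = 1) (hMpow : ∀ j : ℕ, M ≠ 3 ^ j)
    (m : ℕ) (hm : 1 ≤ m)
    (hmdig : (Nat.digits 3 M).getD m 0 ≠ 0)
    (hmlow : ∀ i, 0 < i → i < m → (Nat.digits 3 M).getD i 0 = 0)
    (r : ℕ) (hr : 2 * m ≤ r) :
    ({c : ZMod (3 ^ r) | ∃ lam : ℤ_[3],
        (∀ j, padicDigit lam j ≤ 1) ∧
        (∀ j, padicDigit ((M : ℤ_[3]) * lam) j ≤ 1) ∧
        PadicInt.toZModPow r lam = c}.ncard : ℝ)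
      ≤ (3 : ℝ) ^ ((r : ℝ) / 2 + 2 * m) := by
  haveI : NeZero (3 ^ r : ℕ) := ⟨pow_ne_zero r (by norm_num)⟩
  -- Step 1: structure of M
  have hMj : ∀ j, 1 ≤ j → j ≤ m → M % 3 ^ j = 1 := by
    intro j h1 h2
    induction j with
    | zero => omega
    | succ j ih =>
      rcases Nat.eq_zero_or_pos j with rfl | hj
      · simpa using hM1
      · have hdig : M / 3 ^ j % 3 = 0 := by
          rw [← digits_getD]; exact hmlow j hj (by omega)
        have := ih hj (by omega)
        rw [pow_succ, Nat.mod_mul, this, hdig]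
        omega
  have hC : (M / 3 ^ m) % 3 ≠ 0 := by
    rw [← digits_getD]; exact hmdig
  have hMeq : M = 1 + 3 ^ m * (M / 3 ^ m) := by
    have h := Nat.div_add_mod M (3 ^ m)
    rw [hMj m hm le_rfl] at h
    omega
  have hnat : (AdmCount.adm M r).card ^ 2 ≤ 3 ^ (r + 2*m + 1) :=
    AdmCount.adm_sq m (M / 3 ^ m) hm hMeq hC r
  -- Step 2: the set injects into adm M r
  have hsub : {c : ZMod (3 ^ r) | ∃ lam : ℤ_[3],
        (∀ j, padicDigit lam j ≤ 1) ∧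
        (∀ j, padicDigit ((M : ℤ_[3]) * lam) j ≤ 1) ∧
        PadicInt.toZModPow r lam = c} ⊆
      ↑((AdmCount.adm M r).image (fun x : ℕ => (x : ZMod (3 ^ r)))) := by
    rintro c ⟨lam, h1, h2, h3⟩
    simp only [Finset.coe_image, Set.mem_image, Finset.mem_coe]
    refine ⟨c.val, ?_, ZMod.natCast_zmod_val c⟩
    set x := c.val with hx
    have hxlam : lam - (x : ℤ_[3]) ∈ Ideal.span {((3:ℕ) : ℤ_[3]) ^ r} := by
      rw [← PadicInt.ker_toZModPow, RingHom.mem_ker, map_sub, map_natCast, h3,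
        hx, ZMod.natCast_zmod_val, sub_self]
    have hspan : ∀ i, i < r →
        Ideal.span {((3:ℕ) : ℤ_[3]) ^ r} ≤ Ideal.span {((3:ℕ) : ℤ_[3]) ^ (i+1)} := by
      intro i hi
      rw [Ideal.span_singleton_le_span_singleton]
      exact pow_dvd_pow 3 (by omega)
    rw [AdmCount.mem_adm]
    refine ⟨ZMod.val_lt c, ?_, ?_⟩
    · intro i hi
      have := padicDigit_eq lam x i (hspan i hi hxlam)
      unfold AdmCount.dig
      rw [this]
      exact h1 i
    · intro i hi
      set n' := (M * x) % 3 ^ r with hn'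
      have hmem : (M : ℤ_[3]) * lam - (n' : ℤ_[3]) ∈ Ideal.span {((3:ℕ) : ℤ_[3]) ^ (i+1)} := by
        have e1 : (M : ℤ_[3]) * lam - (n' : ℤ_[3]) =
            (M : ℤ_[3]) * (lam - (x : ℤ_[3])) + ((((3:ℕ) : ℤ_[3]) ^ r) * ((M * x / 3 ^ r : ℕ) : ℤ_[3])) := by
          have hsplit : (M * x : ℕ) = 3 ^ r * (M * x / 3 ^ r) + n' := by
            rw [hn']; exact (Nat.div_add_mod (M*x) (3^r)).symm
          have : ((M * x : ℕ) : ℤ_[3]) = ((3 ^ r * (M * x / 3 ^ r) + n' : ℕ) : ℤ_[3]) := by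
            rw [← hsplit]
          push_cast at this
          push_cast
          linear_combination this
        rw [e1]
        apply Ideal.add_mem
        · exact Ideal.mul_mem_left _ _ (hspan i hi hxlam)
        · rw [Ideal.mem_span_singleton]
          exact Dvd.dvd.mul_right (pow_dvd_pow ((3:ℕ) : ℤ_[3]) (by omega)) _
      have := padicDigit_eq ((M : ℤ_[3]) * lam) n' i hmem
      unfold AdmCount.dig
      rw [this]
      exact h2 i
  -- Step 3: ncard bound
  have hncard : ({c : ZMod (3 ^ r) | ∃ lam : ℤ_[3],
        (∀ j, padicDigit lam j ≤ 1) ∧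
        (∀ j, padicDigit ((M : ℤ_[3]) * lam) j ≤ 1) ∧
        PadicInt.toZModPow r lam = c}.ncard) ≤ (AdmCount.adm M r).card := by
    calc _ ≤ (↑((AdmCount.adm M r).image (fun x : ℕ => (x : ZMod (3 ^ r)))) : Set (ZMod (3^r))).ncard :=
          Set.ncard_le_ncard hsub (Finset.finite_toSet _)
      _ = ((AdmCount.adm M r).image (fun x : ℕ => (x : ZMod (3 ^ r)))).card := Set.ncard_coe_finset _
      _ ≤ (AdmCount.adm M r).card := Finset.card_image_le
  -- Step 4: real arithmetic
  set K : ℕ := (AdmCount.adm M r).card with hK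
  have hKsq : (K : ℝ) ^ 2 ≤ (3 : ℝ) ^ ((r : ℝ) + 2*m + 1) := by
    have : ((K ^ 2 : ℕ) : ℝ) ≤ ((3 ^ (r + 2*m + 1) : ℕ) : ℝ) := by exact_mod_cast hnat
    push_cast at this
    calc (K : ℝ) ^ 2 ≤ (3 : ℝ) ^ (r + 2*m + 1 : ℕ) := by exact_mod_cast this
      _ = (3 : ℝ) ^ (((r + 2*m + 1 : ℕ) : ℝ)) := by rw [Real.rpow_natCast]
      _ = (3 : ℝ) ^ ((r : ℝ) + 2*m + 1) := by norm_num
  set e : ℝ := ((r : ℝ) + 2*m + 1) / 2 with he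
  have hpow : ((3 : ℝ) ^ e) ^ 2 = (3 : ℝ) ^ ((r : ℝ) + 2*m + 1) := by
    rw [← Real.rpow_natCast ((3:ℝ) ^ e) 2, ← Real.rpow_mul (by norm_num : (0:ℝ) ≤ 3)]
    congr 1
    rw [he]
    push_cast
    ring
  have hKle : (K : ℝ) ≤ (3 : ℝ) ^ e := by
    have hbpos : (0:ℝ) < (3:ℝ) ^ e := Real.rpow_pos_of_pos (by norm_num) e
    nlinarith [hKsq, hpow, sq_nonneg ((K:ℝ) - (3:ℝ)^e), (Nat.cast_nonneg K : (0:ℝ) ≤ (K:ℝ))]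
  have hfin : (3 : ℝ) ^ e ≤ (3 : ℝ) ^ ((r : ℝ) / 2 + 2 * m) := by
    apply Real.rpow_le_rpow_of_exponent_le (by norm_num)
    rw [he]
    have h1m : (1:ℝ) ≤ (m:ℝ) := by exact_mod_cast hm
    linarith
  calc ({c : ZMod (3 ^ r) | ∃ lam : ℤ_[3],
        (∀ j, padicDigit lam j ≤ 1) ∧
        (∀ j, padicDigit ((M : ℤ_[3]) * lam) j ≤ 1) ∧
        PadicInt.toZModPow r lam = c}.ncard : ℝ) ≤ (K : ℝ) := by exact_mod_cast hncard
    _ ≤ (3 : ℝ) ^ e := hKle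
    _ ≤ _ := hfin
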